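/- arXiv:math/0412281 — 2 statements merged into one kernel-verified Lean document; each statement's English description precedes it below -/
import Mathlib

section
/- Let k be a field of characteristic zero and let 𝔤 be a finite-dimensional Lie algebra over k whose Killing form κ is nondegenerate (equivalently, 𝔤 is semisimple). Let c : 𝔤 × 𝔤 → k be an alternating bilinear map satisfying the 2-cocycle identity c([X,Y],Z) + c([Y,Z],X) + c([Z,X],Y) = 0 for all X, Y, Z ∈ 𝔤. Then there exists a unique element Z_c ∈ 𝔤 such that c(X,Y) = κ(Z_c, [X,Y]) for all X, Y ∈ 𝔤. -/
/-- Let `k` be a field of characteristic zero and `L` a finite-dimensional Lie algebra over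
`k` whose Killing form is nondegenerate.  For every alternating bilinear 2-cocycle
`c : L × L → k` there exists a unique `Zc ∈ L` with `c X Y = κ(Zc, ⁅X, Y⁆)` for all `X, Y`. -/
theorem algebraic_representative_exists_unique
    (k : Type*) [Field k] [CharZero k]
    (L : Type*) [LieRing L] [LieAlgebra k L] [Module.Finite k L]
    (hκ : (killingForm k L).Nondegenerate)
    (c : L →ₗ[k] L →ₗ[k] k)
    (halt : ∀ X : L, c X X = 0)
    (hcocycle : ∀ X Y Z : L, c ⁅X, Y⁆ Z + c ⁅Y, Z⁆ X + c ⁅Z, X⁆ Y = 0) :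
    ∃! Zc : L, ∀ X Y : L, c X Y = killingForm k L Zc ⁅X, Y⁆ := by
  -- c is skew-symmetric
  have hskew : ∀ X Y : L, c X Y = - c Y X := by
    intro X Y
    have h := halt (X + Y)
    simp only [map_add, LinearMap.add_apply, halt] at h
    linear_combination h
  -- L is a Killing Lie algebra
  haveI : LieAlgebra.IsKilling k L := by
    constructor
    rw [LieSubmodule.eq_bot_iff]
    intro m hm
    apply hκ.1 m
    intro n
    have h0 := (LieIdeal.mem_killingCompl k L ⊤).mp hm n (LieSubmodule.mem_top n)
    rwa [LieModule.traceForm_comm k L L n m] at h0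
  set B := killingForm k L with hB
  have hBsymm : ∀ x y : L, B x y = B y x := fun x y =>
    LieModule.traceForm_comm k L L x y
  have hBinv : ∀ x y z : L, B ⁅x, y⁆ z = B x ⁅y, z⁆ := fun x y z =>
    LieModule.traceForm_apply_lie_apply k L L x y z
  -- define D : L →ₗ L with B (D X) Y = c X Y
  let e := LinearMap.BilinForm.toDual B hκ
  let D : L →ₗ[k] L := e.symm.toLinearMap ∘ₗ c
  have hD : ∀ X Y : L, B (D X) Y = c X Y := fun X Y =>
    LinearMap.BilinForm.apply_toDual_symm_apply (hB := hκ) (f := c X) (v := Y)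
  have hinj : ∀ u v : L, (∀ z : L, B u z = B v z) → u = v := by
    intro u v h
    have h0 := hκ.1 (u - v) (fun z => by rw [map_sub, LinearMap.sub_apply, h, sub_self])
    exact sub_eq_zero.mp h0
  -- D is a derivation
  have hDer : ∀ a b : L, D ⁅a, b⁆ = ⁅a, D b⁆ - ⁅b, D a⁆ := by
    intro a b
    apply hinj
    intro z
    rw [map_sub, LinearMap.sub_apply, hD]
    have h1 : B ⁅a, D b⁆ z = - c b ⁅a, z⁆ := by
      rw [← lie_skew a (D b), map_neg, LinearMap.neg_apply, hBinv, hD]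
    have h2 : B ⁅b, D a⁆ z = - c a ⁅b, z⁆ := by
      rw [← lie_skew b (D a), map_neg, LinearMap.neg_apply, hBinv, hD]
    have hc := hcocycle a b z
    have e1 : c ⁅b, z⁆ a = - c a ⁅b, z⁆ := hskew _ _
    have e2 : c ⁅z, a⁆ b = c b ⁅a, z⁆ := by
      rw [hskew (⁅z, a⁆) b]
      have : (⁅z, a⁆ : L) = -⁅a, z⁆ := by rw [← lie_skew]
      rw [this, map_neg]; ring
    rw [e1, e2] at hc
    rw [h1, h2]
    linear_combination hc
  -- derivation structure, hence inner
  let Dd : LieDerivation k L L := ⟨D, hDer⟩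
  obtain ⟨x, hx⟩ := LieDerivation.IsKilling.exists_eq_ad (R := k) Dd
  have hDx : ∀ X : L, D X = ⁅x, X⁆ := by
    intro X
    have h1 := congr_fun (congrArg DFunLike.coe hx) X
    have h2 : (LieDerivation.ad k L x) X = ⁅x, X⁆ := by
      have := LieDerivation.coe_ad_apply_eq_ad_apply (R := k) x
      calc (LieDerivation.ad k L x) X = (LieAlgebra.ad k L x) X := by rw [← this]; rfl
        _ = ⁅x, X⁆ := rfl
    have h3 : (Dd : L → L) X = D X := rfl
    exact h3.symm.trans (h1.symm.trans h2)
  refine ⟨x, fun X Y => ?_, fun y hy => ?_⟩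
  · rw [← hD X Y, hDx X, hBinv]
  · -- uniqueness: B (y - x) ⁅X,Y⁆ = 0 for all X Y ⇒ ad (y - x) = 0 ⇒ y = x
    have hdiff : ∀ X Y : L, B (y - x) ⁅X, Y⁆ = 0 := by
      intro X Y
      have h1 := hy X Y
      have h2 : c X Y = B x ⁅X, Y⁆ := by
        rw [← hD X Y, hDx X, hBinv]
      rw [map_sub, LinearMap.sub_apply, ← h1, ← h2, sub_self]
    have had : ∀ X : L, ⁅y - x, X⁆ = (0 : L) := by
      intro X
      apply hκ.1
      intro Z
      rw [hBinv]
      exact hdiff X Z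
    have hyx : y - x = 0 := by
      have hinj := LieDerivation.injective_ad_of_center_eq_bot
        (R := k) (L := L) (LieAlgebra.center_eq_bot k L)
      apply hinj
      ext X
      simpa using had X
    exact sub_eq_zero.mp hyx
end

section
/- Let k be a field of characteristic zero and let 𝔤 be a finite-dimensional Lie algebra over k whose Killing form κ is nondegenerate. Let c : 𝔤 × 𝔤 → k be an alternating bilinear 2-cocycle, and let F : 𝔤 → 𝔤 be the unique linear map satisfying κ(F(X), Y) = c(X,Y) for all X, Y ∈ 𝔤 (which exists since κ is nondegenerate). Then F is a derivation of 𝔤, i.e. F([X,Y]) = [F(X), Y] + [X, F(Y)] for all X, Y ∈ 𝔤. -/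
/-- Let `k` be a field of characteristic zero and `L` a finite-dimensional Lie algebra over `k`
whose Killing form `κ` is nondegenerate.  If `c` is an alternating bilinear 2-cocycle on `L` and
`F : L → L` is the unique linear map satisfying `κ(F X, Y) = c X Y` for all `X, Y`, then `F` is
a derivation of `L`. -/
theorem cocycle_representing_endomorphism_is_derivation
    (k : Type*) [Field k] [CharZero k]
    (L : Type*) [LieRing L] [LieAlgebra k L] [Module.Finite k L]
    (hκ : (killingForm k L).Nondegenerate)
    (c : L →ₗ[k] L →ₗ[k] k)
    (halt : ∀ X : L, c X X = 0)
    (hcocycle : ∀ X Y Z : L, c ⁅X, Y⁆ Z + c ⁅Y, Z⁆ X + c ⁅Z, X⁆ Y = 0)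
    (F : L →ₗ[k] L)
    (hF : ∀ X Y : L, killingForm k L (F X) Y = c X Y) :
    ∀ X Y : L, F ⁅X, Y⁆ = ⁅F X, Y⁆ + ⁅X, F Y⁆ := by
  intro X Y
  have hskew : ∀ a b : L, c a b = - c b a := by
    intro a b
    have h := halt (a + b)
    simp only [map_add, LinearMap.add_apply, halt a, halt b] at h
    linear_combination h
  rw [← sub_eq_zero]
  apply hκ.1
  intro Z
  have h1 : killingForm k L (F ⁅X, Y⁆) Z = c ⁅X, Y⁆ Z := hF _ _
  have h2 : killingForm k L ⁅F X, Y⁆ Z = c X ⁅Y, Z⁆ := by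
    rw [LieModule.traceForm_apply_lie_apply, hF]
  have h3 : killingForm k L ⁅X, F Y⁆ Z = - c Y ⁅X, Z⁆ := by
    rw [← lie_skew, map_neg, LinearMap.neg_apply,
      LieModule.traceForm_apply_lie_apply, hF]
  have h4 := hcocycle X Y Z
  have h5 : c ⁅Y, Z⁆ X = - c X ⁅Y, Z⁆ := hskew _ _
  have h6 : c ⁅Z, X⁆ Y = - c Y ⁅Z, X⁆ := hskew _ _
  have h7 : c Y ⁅Z, X⁆ = - c Y ⁅X, Z⁆ := by rw [← lie_skew, map_neg]
  simp only [map_sub, map_add, LinearMap.sub_apply, LinearMap.add_apply, h1, h2, h3]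
  linear_combination h4 - h5 - h6 + h7
end
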